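/- In the Setting, assume that λ > μ(𝔞) − 1, where μ(𝔞) denotes the minimal number of generators of the ideal 𝔞. Then for every integer n ≥ 0 one has τ_n(X/V, φ I, 𝔞^λ) · 𝔞 = τ_n(X/V, φ I, 𝔞^{λ+1}) as ideals of B_n. -/

import Mathlib

/-!
This file formalizes a statement about the limiting relative test ideals of
Sato–Takagi, "General hyperplane sections of log canonical threefolds /
Deformations of F-pure and F-regular singularities" (Appendix A).

Throughout, for a (commutative) ring `C` of characteristic `p > 0` and `q = p^e`,
the ring `C^{1/q^n}` of `q^n`-th roots is *modelled* by a copy of `C`, the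
identification being the isomorphism `ψ_n : C^{1/q^n} ≃ C`, `x ↦ x^{q^n}`.
Under this identification:
* the inclusion `C ⊆ C^{1/q^n}` becomes `x ↦ x^{q^n}`,
* the inclusion `C^{1/q^i} ⊆ C^{1/q^n}` (`i ≤ n`) becomes `x ↦ x^{q^{n-i}}`,
* for a `C`-module `M`, the `C^{1/q^n}`-module `M^{1/q^n}` becomes the
  abelian group `M` with appropriately twisted scalar multiplications.
All objects of the Setting (`B_n = R ⊗_A A^{1/q^n}`, `L^{(n)}`, the maps
`φ̃_n`, `φ^n`, the ideals `τ_n(X/V, φ I, 𝔞^λ)`) are realized accordingly below.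
-/

open scoped TensorProduct

noncomputable section

universe u

/-- `A^{1/q^n}`, realized as a copy of `A`; the identification sends `x ∈ A^{1/q^n}`
to its coordinate `x^{q^n} ∈ A`. -/
def ARoot (A : Type u) (p e n : ℕ) : Type u := A

namespace ARoot

variable (A : Type u) [CommRing A] (p e : ℕ) [ExpChar A p]

instance (n : ℕ) : CommRing (ARoot A p e n) := inferInstanceAs (CommRing A)

/-- the inclusion `A ⊆ A^{1/q^n}` (in coordinates, `a ↦ a^{q^n}`). -/
instance (n : ℕ) : Algebra A (ARoot A p e n) :=
  (show A →+* ARoot A p e n from iterateFrobenius A p (e * n)).toAlgebra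

/-- coordinate-wise identity map `A^{1/q^m} → A^{1/q^n}`; for `m ≤ n` this is the
`q^{n-m}`-th root isomorphism `x ↦ x^{1/q^{n-m}}`. -/
def cast {A : Type u} {p e : ℕ} (m n : ℕ) (a : ARoot A p e m) : ARoot A p e n := a

/-- the inclusion `A^{1/q^i} ⊆ A^{1/q^n}` for `i ≤ n` (in coordinates,
`x ↦ x^{q^{n-i}}`). -/
def incl (i n : ℕ) (h : i ≤ n) : ARoot A p e i →ₐ[A] ARoot A p e n :=
  AlgHom.mk (show ARoot A p e i →+* ARoot A p e n from iterateFrobenius A p (e * (n - i)))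
    (fun a => by
      show iterateFrobenius A p (e * (n - i)) (iterateFrobenius A p (e * i) a)
        = iterateFrobenius A p (e * n) a
      rw [iterateFrobenius_def, iterateFrobenius_def, iterateFrobenius_def,
        ← pow_mul, ← pow_add, ← Nat.mul_add, Nat.add_sub_cancel' h])

end ARoot

section B

variable (A : Type u) [CommRing A] (p e : ℕ) [ExpChar A p]
variable (R : Type u) [CommRing R] [Algebra A R] [ExpChar R p]

/-- `B_n := R ⊗_A A^{1/q^n}`. -/
def BRing (n : ℕ) : Type u := R ⊗[A] (ARoot A p e n)

instance (n : ℕ) : CommRing (BRing A p e R n) :=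
  inferInstanceAs (CommRing (R ⊗[A] ARoot A p e n))

instance (n : ℕ) : Algebra A (BRing A p e R n) :=
  inferInstanceAs (Algebra A (R ⊗[A] ARoot A p e n))

instance (n : ℕ) : Algebra R (BRing A p e R n) :=
  inferInstanceAs (Algebra R (R ⊗[A] ARoot A p e n))

/-- the natural map `a_{i,n} : B_i → B_n` (`i ≤ n`) induced by
`A^{1/q^i} ⊆ A^{1/q^n}`. -/
def aMap (i n : ℕ) (h : i ≤ n) : BRing A p e R i →ₐ[A] BRing A p e R n :=
  Algebra.TensorProduct.map (AlgHom.id A R) (ARoot.incl A p e i n h)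

/-- A copy of `R` with the `A`-algebra structure `a ↦ (algebraMap A R a)^{q^n}`;
an auxiliary device used to define `Θ_n : B_n → R` below. -/
def Rtw (A : Type u) (p e : ℕ) (R : Type u) (n : ℕ) : Type u := R

instance (n : ℕ) : CommRing (Rtw A p e R n) := inferInstanceAs (CommRing R)

instance (n : ℕ) : Algebra A (Rtw A p e R n) :=
  ((show R →+* Rtw A p e R n from iterateFrobenius R p (e * n)).comp (algebraMap A R)).toAlgebra

/-- `Θ_n : B_n = R ⊗_A A^{1/q^n} →+* R` is the ring homomorphism corresponding, under
the identifications above, to the inclusion `B_n ⊆ R^{1/q^n}` followed by the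
isomorphism `R^{1/q^n} ≅ R`, `x ↦ x^{q^n}`; concretely, on coordinates,
`Θ_n (r ⊗ a) = r^{q^n} · g(a)` where `g : A → R` is the structure map.
Restriction of scalars along `Θ_n` equips the underlying group `M` of an
`R`-module with its `B_n`-module structure of `M^{1/q^n}`. -/
def theta (n : ℕ) : BRing A p e R n →+* R :=
  show BRing A p e R n →+* Rtw A p e R n from
  (Algebra.TensorProduct.productMap
    (AlgHom.mk (show R →+* Rtw A p e R n from iterateFrobenius R p (e * n)) (fun a => by
      show iterateFrobenius R p (e * n) (algebraMap A R a) = algebraMap A (Rtw A p e R n) a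
      rw [RingHom.algebraMap_toAlgebra]; rfl))
    (AlgHom.mk (show ARoot A p e n →+* Rtw A p e R n from algebraMap A R) (fun a => by
      show algebraMap A R (iterateFrobenius A p (e * n) a)
          = iterateFrobenius R p (e * n) (algebraMap A R a)
      rw [iterateFrobenius_def, iterateFrobenius_def, map_pow]))).toRingHom

/-- `M^{1/q^n}` for an `R`-module `M`: the abelian group `M` viewed as a module
over `B_n` via `Θ_n`. -/
def RootMod (A : Type u) (p e : ℕ) (R : Type u) (n : ℕ) (M : Type u) : Type u := M

instance (n : ℕ) (M : Type u) [AddCommGroup M] : AddCommGroup (RootMod A p e R n M) :=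
  inferInstanceAs (AddCommGroup M)

instance (n : ℕ) (M : Type u) [AddCommGroup M] [Module R M] :
    Module (BRing A p e R n) (RootMod A p e R n M) :=
  Module.compHom M (theta A p e R n)

/-- the tautological map `M → M^{1/q^n}`, `x ↦ x^{1/q^n}`. -/
def RootMod.of (n : ℕ) {M : Type u} (x : M) : RootMod A p e R n M := x

variable (L : Type u) [AddCommGroup L] [Module R L]

/-- `L^{(n)} := L^{⊗ (q^n - 1)/(q - 1)}`, realized recursively via
`L^{(0)} = R` and `L^{(n+1)} = L^{⊗ q^n} ⊗_R L^{(n)}`. -/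
def LObj (q : ℕ) : ℕ → ModuleCat.{u} R
  | 0 => ModuleCat.of R R
  | (n+1) => ModuleCat.of R (TensorPower R (q ^ n) L ⊗[R] (LObj q n))

/-- The `n`-th limiting relative test ideal
`τ_n(X/V, φ I, 𝔞^λ) := Σ_{i=0}^n φ^i((𝔞^{⌈q^i λ⌉} I L^{(i)})^{1/q^i}) B_n ⊆ B_n`,
expressed in terms of the family `Φ = (φ^i)_i` of the maps
`φ^i : (L^{(i)})^{1/q^i} → B_i`. -/
def tauRel
    (Φ : (n : ℕ) → (RootMod A p e R n (LObj R L (p ^ e) n)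
      →ₗ[BRing A p e R n] BRing A p e R n))
    (I 𝔞 : Ideal R) (lam : ℝ) (n : ℕ) : Ideal (BRing A p e R n) :=
  ⨆ i : Fin (n + 1),
    Ideal.span ((aMap A p e R i n (Nat.lt_succ_iff.mp i.isLt)) ''
      ((fun x : LObj R L (p ^ e) i => Φ i (RootMod.of A p e R i x)) ''
        (((𝔞 ^ ⌈((p : ℝ) ^ e) ^ (i : ℕ) * lam⌉₊ * I) •
            (⊤ : Submodule R (LObj R L (p ^ e) i)) :
              Submodule R (LObj R L (p ^ e) i)) :
          Set (LObj R L (p ^ e) i))))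

end B


section AuxLemmas

open Pointwise

variable {R' B' : Type*} [CommRing R'] [CommRing B']

lemma aux_prod_mem_pow (J : Ideal R') (M : Multiset R') (h : ∀ x ∈ M, x ∈ J) :
    M.prod ∈ J ^ Multiset.card M := by
  induction M using Multiset.induction_on with
  | empty => simp
  | cons a M ih =>
      rw [Multiset.prod_cons, Multiset.card_cons, pow_succ']
      exact Ideal.mul_mem_mul (h a (Multiset.mem_cons_self a M))
        (ih fun x hx => h x (Multiset.mem_cons_of_mem hx))

lemma aux_le_sum {ι : Type*} (s : Finset ι) (F : ι → Ideal R') {a : ι} (ha : a ∈ s) :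
    F a ≤ ∑ b ∈ s, F b := by
  classical
  rw [← Finset.add_sum_erase s F ha, Submodule.add_eq_sup]
  exact le_sup_left

lemma aux_sum_le {ι : Type*} (s : Finset ι) (F : ι → Ideal R') (U : Ideal R')
    (h : ∀ a ∈ s, F a ≤ U) : ∑ b ∈ s, F b ≤ U := by
  classical
  induction s using Finset.induction_on with
  | empty => simp
  | insert a t hnot ih =>
      rw [Finset.sum_insert hnot, Submodule.add_eq_sup]
      exact sup_le (h a (Finset.mem_insert_self a t))
        (ih fun b hb => h b (Finset.mem_insert_of_mem hb))

lemma aux_skoda (s : Finset R') (Q k : ℕ)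
    (hk : s.card * (Q - 1) < k) :
    (Ideal.span (s : Set R')) ^ k ≤
      ∑ a ∈ s, Ideal.span {a ^ Q} * (Ideal.span (s : Set R')) ^ (k - Q) := by
  classical
  rw [show ((Ideal.span (s : Set R')) ^ k : Ideal R') = Ideal.span ((s : Set R') ^ k) from
    Submodule.span_pow _ _]
  rw [Ideal.span_le]
  rintro x hx
  rw [Set.mem_pow] at hx
  obtain ⟨f, hf⟩ := hx
  set M : Multiset R' := ((List.ofFn fun i => (f i : R')) : Multiset R') with hM
  have hMcard : Multiset.card M = k := by simp [hM]
  have hMs : ∀ b ∈ M, b ∈ s := by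
    intro b hb
    rw [hM, Multiset.mem_coe, List.mem_ofFn] at hb
    obtain ⟨i, hi⟩ := hb
    rw [← hi]; exact (f i).2
  have hpig : ∃ a ∈ s, Q ≤ M.count a := by
    by_contra h
    push_neg at h
    have hle : k ≤ s.card * (Q - 1) := by
      calc k = Multiset.card M := hMcard.symm
        _ = ∑ a ∈ M.toFinset, M.count a := (Multiset.toFinset_sum_count_eq M).symm
        _ ≤ ∑ a ∈ s, M.count a :=
            Finset.sum_le_sum_of_subset (fun a ha => hMs a (Multiset.mem_toFinset.1 ha))
        _ ≤ ∑ _a ∈ s, (Q - 1) := Finset.sum_le_sum (fun a ha => by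
            have := h a ha; omega)
        _ = s.card * (Q - 1) := by rw [Finset.sum_const, smul_eq_mul]
    omega
  obtain ⟨a, has, hQa⟩ := hpig
  have hrep : Multiset.replicate Q a ≤ M := Multiset.le_count_iff_replicate_le.1 hQa
  have hsplit : (M - Multiset.replicate Q a) + Multiset.replicate Q a = M :=
    tsub_add_cancel_of_le hrep
  have hx' : x = a ^ Q * (M - Multiset.replicate Q a).prod := by
    have h1 : x = M.prod := by rw [← hf, hM]; simp
    rw [h1]
    conv_lhs => rw [← hsplit]
    rw [Multiset.prod_add, Multiset.prod_replicate, mul_comm]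
  have hcard' : Multiset.card (M - Multiset.replicate Q a) = k - Q := by
    rw [Multiset.card_sub hrep, Multiset.card_replicate, hMcard]
  have hmem : (M - Multiset.replicate Q a).prod ∈ (Ideal.span (s : Set R')) ^ (k - Q) := by
    rw [← hcard']
    exact aux_prod_mem_pow _ _ fun x hx =>
      Ideal.subset_span (hMs x (Multiset.mem_of_le (tsub_le_self) hx))
  have : x ∈ Ideal.span {a ^ Q} * (Ideal.span (s : Set R')) ^ (k - Q) := by
    rw [hx']
    exact Ideal.mul_mem_mul (Ideal.subset_span rfl) hmem
  exact aux_le_sum s _ has this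

lemma aux_iSup_mul_le {ι : Sort*} (F : ι → Ideal B') (K V : Ideal B')
    (h : ∀ i, F i * K ≤ V) : (⨆ i, F i) * K ≤ V := by
  rw [Ideal.mul_le]
  intro r hr t ht
  refine Submodule.iSup_induction (motive := fun r => r * t ∈ V) F hr
    (fun i x hx => h i (Ideal.mul_mem_mul hx ht)) (by simp) (fun x y hx hy => ?_)
  show (x + y) * t ∈ V
  rw [add_mul]; exact V.add_mem hx hy

variable {M' : Type*} [AddCommGroup M'] [Module R' M']

lemma aux_dir1 (G : M' → B') (α : R' →+* B') (Q : ℕ)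
    (hG : ∀ (r : R') (x : M'), G ((r ^ Q) • x) = α r * G x)
    (𝔞 I : Ideal R') (m : ℕ) :
    Ideal.span (G '' ((𝔞 ^ m * I) • (⊤ : Submodule R' M') : Submodule R' M')) * Ideal.map α 𝔞
      ≤ Ideal.span (G '' ((𝔞 ^ (m + Q) * I) • (⊤ : Submodule R' M') : Submodule R' M')) := by
  set T := Ideal.span (G '' ((𝔞 ^ (m + Q) * I) • (⊤ : Submodule R' M') : Submodule R' M'))
    with hT
  rw [Ideal.mul_le]
  intro r hr y hy
  revert y
  refine Submodule.span_induction (p := fun r _ => ∀ y ∈ Ideal.map α 𝔞, r * y ∈ T)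
    ?_ (by simp) (fun x y _ _ hx hy z hz => by
      show (x + y) * z ∈ T
      rw [add_mul]; exact T.add_mem (hx z hz) (hy z hz))
    (fun c x _ hx z hz => by
      show (c • x) * z ∈ T
      rw [smul_eq_mul, mul_assoc]; exact T.mul_mem_left c (hx z hz)) hr
  rintro _ ⟨v, hv, rfl⟩ y hy
  have hy' : y ∈ Ideal.span (⇑α '' (𝔞 : Set R')) := hy
  refine Submodule.span_induction (p := fun y _ => G v * y ∈ T)
    ?_ (by simp) (fun x y _ _ hx hy => by
      show G v * (x + y) ∈ T
      rw [mul_add]; exact T.add_mem hx hy)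
    (fun c x _ hx => by
      show G v * (c • x) ∈ T
      rw [smul_eq_mul, mul_left_comm]; exact T.mul_mem_left c hx) hy'
  rintro _ ⟨a, ha, rfl⟩
  show G v * α a ∈ T
  have hmem : (a ^ Q) • v ∈ ((𝔞 ^ (m + Q) * I) • (⊤ : Submodule R' M') : Submodule R' M') := by
    have h1 : (a ^ Q) • v ∈ (𝔞 ^ Q) • ((𝔞 ^ m * I) • (⊤ : Submodule R' M')) :=
      Submodule.smul_mem_smul (Ideal.pow_mem_pow ha Q) hv
    have h2 : (𝔞 ^ Q) • ((𝔞 ^ m * I) • (⊤ : Submodule R' M'))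
        = (𝔞 ^ (m + Q) * I) • (⊤ : Submodule R' M') := by
      rw [← Submodule.smul_assoc, Ideal.smul_eq_mul]
      congr 1
      ring
    rwa [h2] at h1
  rw [mul_comm, ← hG a v]
  exact Ideal.subset_span ⟨_, hmem, rfl⟩

lemma aux_dir2 (G : M' → B') (hGadd : ∀ x y, G (x + y) = G x + G y)
    (α : R' →+* B') (Q : ℕ)
    (hG : ∀ (r : R') (x : M'), G ((r ^ Q) • x) = α r * G x)
    (𝔞 I : Ideal R') (s : Finset R') (hs : Ideal.span (s : Set R') = 𝔞) (m : ℕ)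
    (hk : s.card * (Q - 1) < m + Q) :
    Ideal.span (G '' ((𝔞 ^ (m + Q) * I) • (⊤ : Submodule R' M') : Submodule R' M'))
      ≤ Ideal.span (G '' ((𝔞 ^ m * I) • (⊤ : Submodule R' M') : Submodule R' M'))
        * Ideal.map α 𝔞 := by
  set T := Ideal.span (G '' ((𝔞 ^ m * I) • (⊤ : Submodule R' M') : Submodule R' M'))
      * Ideal.map α 𝔞 with hT
  set U : Ideal R' :=
    { carrier := {r : R' | ∀ x : M', G (r • x) ∈ T}
      add_mem' := fun {a b} ha hb x => by
        rw [add_smul, hGadd]; exact T.add_mem (ha x) (hb x)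
      zero_mem' := fun x => by
        have h := hGadd 0 0
        rw [add_zero, left_eq_add] at h
        rw [zero_smul, h]; exact T.zero_mem
      smul_mem' := fun c {r} hr x => by
        rw [smul_eq_mul, mul_comm, mul_smul]
        exact hr (c • x) } with hU
  have hsk : 𝔞 ^ (m + Q) * I ≤ U := by
    have h1 : 𝔞 ^ (m + Q) ≤ ∑ a ∈ s, Ideal.span {a ^ Q} * 𝔞 ^ m := by
      have := aux_skoda s Q (m + Q) hk
      rw [hs] at this
      simpa using this
    calc 𝔞 ^ (m + Q) * I ≤ (∑ a ∈ s, Ideal.span {a ^ Q} * 𝔞 ^ m) * I :=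
          Ideal.mul_mono_left h1
      _ = ∑ a ∈ s, Ideal.span {a ^ Q} * (𝔞 ^ m * I) := by
          rw [Finset.sum_mul]
          exact Finset.sum_congr rfl fun a _ => mul_assoc _ _ _
      _ ≤ U := aux_sum_le s _ U ?_
    intro a ha
    rw [Ideal.mul_le]
    intro u hu w hw
    obtain ⟨t, ht⟩ := Ideal.mem_span_singleton'.1 hu
    intro x
    show G ((u * w) • x) ∈ T
    have heq : (u * w) • x = (a ^ Q) • ((t * w) • x) := by
      rw [smul_smul, ← ht]
      congr 1
      ring
    rw [heq, hG]
    have hmem1 : G ((t * w) • x) ∈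
        Ideal.span (G '' ((𝔞 ^ m * I) • (⊤ : Submodule R' M') : Submodule R' M')) :=
      Ideal.subset_span ⟨_, Submodule.smul_mem_smul (Ideal.mul_mem_left _ t hw)
        Submodule.mem_top, rfl⟩
    have hmem2 : α a ∈ Ideal.map α 𝔞 :=
      Ideal.mem_map_of_mem α (hs ▸ Ideal.subset_span ha)
    rw [mul_comm]
    exact Ideal.mul_mem_mul hmem1 hmem2
  rw [Ideal.span_le]
  rintro _ ⟨v, hv, rfl⟩
  refine Submodule.smul_induction_on hv (fun r hr x _ => hsk hr x) (fun x y hx hy => ?_)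
  show G (x + y) ∈ T
  rw [hGadd]; exact T.add_mem hx hy

end AuxLemmas

lemma aux_key (A : Type u) [CommRing A] (p : ℕ) [Fact p.Prime] [CharP A p] (e : ℕ)
    (R : Type u) [CommRing R] [Algebra A R] [CharP R p]
    (L : Type u) [AddCommGroup L] [Module R L]
    (Φ : (n : ℕ) → (RootMod A p e R n (LObj R L (p ^ e) n)
      →ₗ[BRing A p e R n] BRing A p e R n))
    (i n : ℕ) (hi : i ≤ n) (r : R) (x : LObj R L (p ^ e) i) :
    aMap A p e R i n hi (Φ i (RootMod.of A p e R i ((r ^ ((p ^ e) ^ i)) • x)))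
      = algebraMap R (BRing A p e R n) r
          * aMap A p e R i n hi (Φ i (RootMod.of A p e R i x)) := by
  have h1 : RootMod.of A p e R i ((r ^ ((p ^ e) ^ i)) • x)
      = (algebraMap R (BRing A p e R i) r) • RootMod.of A p e R i x := by
    show (r ^ ((p ^ e) ^ i)) • x = theta A p e R i (algebraMap R (BRing A p e R i) r) • x
    congr 1
    show r ^ ((p ^ e) ^ i) = theta A p e R i (r ⊗ₜ[A] (1 : ARoot A p e i))
    show r ^ ((p ^ e) ^ i) = iterateFrobenius R p (e * i) r * algebraMap A R (1 : A)
    rw [map_one, mul_one, iterateFrobenius_def, ← pow_mul]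
  rw [h1, map_smul, smul_eq_mul, map_mul]
  congr 1
  show aMap A p e R i n hi (r ⊗ₜ[A] (1 : ARoot A p e i)) = algebraMap R (BRing A p e R n) r
  show Algebra.TensorProduct.map (AlgHom.id A R) (ARoot.incl A p e i n hi)
      (r ⊗ₜ[A] (1 : ARoot A p e i)) = algebraMap R (BRing A p e R n) r
  rw [Algebra.TensorProduct.map_tmul, map_one, AlgHom.coe_id, id_eq]
  rfl

section Setting

/-! ### The Setting

`A` is a Noetherian integral domain of characteristic `p > 0`, `R` is an integral
domain which is flat and essentially of finite type over `A`, `q = p^e`,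
`L` is an invertible `R`-module, `φ : L^{1/q} → B_1 = R ⊗_A A^{1/q}` is a
`B_1`-module homomorphism, `I` and `𝔞` are nonzero ideals of `R` and `lam > 0` is
a real number.

The map `φ̃_{n+1} : (L ⊗_R B_n)^{1/q} → B_{n+1}` is the additive map `Φt n`
(uniquely) characterized by the hypothesis `hΦt`, and the `B_n`-linear map
`φ^n : (L^{(n)})^{1/q^n} → B_n` is the map `Φ n`, (uniquely) characterized by the
recursion hypotheses `hΦzero`, `hΦsucc`. -/

variable (A : Type u) [CommRing A] [IsDomain A] [IsNoetherianRing A]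
variable (p : ℕ) [Fact p.Prime] [CharP A p] (e : ℕ)
variable (R : Type u) [CommRing R] [IsDomain R] [Algebra A R] [CharP R p]
variable [Module.Flat A R] [Algebra.EssFiniteType A R]
variable (L : Type u) [AddCommGroup L] [Module R L]
variable [Module.Finite R L] [Module.Projective R L]
variable (I 𝔞 : Ideal R) (lam : ℝ)
variable (φ : RootMod A p e R 1 L →ₗ[BRing A p e R 1] BRing A p e R 1)
variable (Φt : (n : ℕ) → (L ⊗[R] BRing A p e R n) →+ BRing A p e R (n + 1))
variable (Φ : (n : ℕ) → (RootMod A p e R n (LObj R L (p ^ e) n)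
  →ₗ[BRing A p e R n] BRing A p e R n))

/-- Lemma on Skoda-type behaviour of limiting relative test ideals.
In the Setting, if `lam > μ(𝔞) - 1` (expressed by the existence of a generating set
`s` of `𝔞` with `s.card - 1 < lam`; since `μ(𝔞)` is the minimal cardinality of such a
set, this is equivalent to `lam > μ(𝔞) - 1`), then for every `n ≥ 0`,
`τ_n(X/V, φ I, 𝔞^lam) · 𝔞 = τ_n(X/V, φ I, 𝔞^{lam+1})` as ideals of `B_n`. -/
theorem statement4
    (hp : p.Prime) (hI : I ≠ ⊥) (h𝔞 : 𝔞 ≠ ⊥) (hlam : 0 < lam)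
    (hL : ∃ L' : ModuleCat.{u} R, Nonempty ((L ⊗[R] L') ≃ₗ[R] R))
    (hΦt : ∀ (n : ℕ) (l : L) (r : R) (a : ARoot A p e n),
      Φt n (l ⊗ₜ[R] (r ⊗ₜ[A] a))
        = aMap A p e R 1 (n+1) (by omega) (φ (RootMod.of A p e R 1 (r • l)))
            * (show BRing A p e R (n+1) from (1 : R) ⊗ₜ[A] (ARoot.cast n (n+1) a)))
    (hΦzero : Φ 0 (RootMod.of A p e R 0 (1 : R)) = 1)
    (hΦsucc : ∀ (n : ℕ) (l : L) (w : LObj R L (p ^ e) n),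
      Φ (n+1) (RootMod.of A p e R (n+1)
          ((PiTensorProduct.tprod R fun _ : Fin ((p ^ e) ^ n) => l) ⊗ₜ[R] w))
        = Φt n (l ⊗ₜ[R] (Φ n (RootMod.of A p e R n w))))
    (s : Finset R) (hs : Ideal.span (s : Set R) = 𝔞)
    (hcard : (s.card : ℝ) - 1 < lam) (n : ℕ) :
    tauRel A p e R L Φ I 𝔞 lam n * Ideal.map (algebraMap R (BRing A p e R n)) 𝔞
      = tauRel A p e R L Φ I 𝔞 (lam + 1) n := by
  classical
  have hppos : 0 < p := hp.pos
  have hsne : s.Nonempty := by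
    rcases Finset.eq_empty_or_nonempty s with h | h
    · exfalso; apply h𝔞; rw [← hs, h]; simp
    · exact h
  have hμ : 1 ≤ s.card := Finset.card_pos.mpr hsne
  have hcR : ∀ i : ℕ, (0 : ℝ) < ((p : ℝ) ^ e) ^ i :=
    fun i => pow_pos (pow_pos (by exact_mod_cast hppos) e) i
  have hcast : ∀ i : ℕ, (((p ^ e) ^ i : ℕ) : ℝ) = ((p : ℝ) ^ e) ^ i := by
    intro i; push_cast; ring
  have hceil : ∀ i : ℕ, ⌈((p : ℝ) ^ e) ^ i * (lam + 1)⌉₊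
      = ⌈((p : ℝ) ^ e) ^ i * lam⌉₊ + (p ^ e) ^ i := by
    intro i
    have h0 : (0 : ℝ) ≤ (((p ^ e) ^ i : ℕ) : ℝ) * lam := by
      rw [hcast i]; exact le_of_lt (mul_pos (hcR i) hlam)
    rw [← hcast i, mul_add, mul_one, Nat.ceil_add_natCast h0]
  have hbound : ∀ i : ℕ, s.card * ((p ^ e) ^ i - 1)
      < ⌈((p : ℝ) ^ e) ^ i * lam⌉₊ + (p ^ e) ^ i := by
    intro i
    have hm : (s.card - 1) * (p ^ e) ^ i < ⌈((p : ℝ) ^ e) ^ i * lam⌉₊ := by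
      rw [Nat.lt_ceil]
      have h1 : ((s.card - 1 : ℕ) : ℝ) = (s.card : ℝ) - 1 := by
        rw [Nat.cast_sub hμ, Nat.cast_one]
      rw [Nat.cast_mul, h1, hcast i]
      calc ((s.card : ℝ) - 1) * ((p : ℝ) ^ e) ^ i < lam * ((p : ℝ) ^ e) ^ i :=
            mul_lt_mul_of_pos_right hcard (hcR i)
        _ = ((p : ℝ) ^ e) ^ i * lam := mul_comm _ _
    have hQ1 : 1 ≤ (p ^ e) ^ i := Nat.one_le_pow _ _ (Nat.pow_pos hppos)
    have h2 : (s.card - 1) * (p ^ e) ^ i = s.card * (p ^ e) ^ i - (p ^ e) ^ i :=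
      Nat.sub_one_mul _ _
    have h3 : s.card * ((p ^ e) ^ i - 1) = s.card * (p ^ e) ^ i - s.card :=
      Nat.mul_sub_one ..
    have h4 : (p ^ e) ^ i ≤ s.card * (p ^ e) ^ i := Nat.le_mul_of_pos_left _ hμ
    omega
  apply le_antisymm
  · simp only [tauRel, Set.image_image, hceil]
    refine aux_iSup_mul_le _ _ _ (fun i => ?_)
    refine le_trans (aux_dir1
      (fun x : LObj R L (p ^ e) (i : ℕ) => aMap A p e R i n (Nat.lt_succ_iff.mp i.isLt)
        (Φ i (RootMod.of A p e R i x)))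
      (algebraMap R (BRing A p e R n)) ((p ^ e) ^ (i : ℕ))
      (fun r x => aux_key A p e R L Φ i n (Nat.lt_succ_iff.mp i.isLt) r x)
      𝔞 I ⌈((p : ℝ) ^ e) ^ (i : ℕ) * lam⌉₊) ?_
    exact le_iSup (fun j : Fin (n + 1) =>
      Ideal.span ((fun x : LObj R L (p ^ e) (j : ℕ) => aMap A p e R j n
        (Nat.lt_succ_iff.mp j.isLt) (Φ j (RootMod.of A p e R j x))) ''
        (((𝔞 ^ (⌈((p : ℝ) ^ e) ^ (j : ℕ) * lam⌉₊ + (p ^ e) ^ (j : ℕ)) * I) •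
            (⊤ : Submodule R (LObj R L (p ^ e) (j : ℕ))) :
          Submodule R (LObj R L (p ^ e) (j : ℕ))) : Set (LObj R L (p ^ e) (j : ℕ))))) i
  · simp only [tauRel, Set.image_image, hceil]
    refine iSup_le (fun i => ?_)
    refine le_trans (aux_dir2
      (fun x : LObj R L (p ^ e) (i : ℕ) => aMap A p e R i n (Nat.lt_succ_iff.mp i.isLt)
        (Φ i (RootMod.of A p e R i x)))
      (fun x y => by
        show aMap A p e R i n (Nat.lt_succ_iff.mp i.isLt)
            (Φ i (RootMod.of A p e R i x + RootMod.of A p e R i y)) = _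
        rw [map_add, map_add])
      (algebraMap R (BRing A p e R n)) ((p ^ e) ^ (i : ℕ))
      (fun r x => aux_key A p e R L Φ i n (Nat.lt_succ_iff.mp i.isLt) r x)
      𝔞 I s hs ⌈((p : ℝ) ^ e) ^ (i : ℕ) * lam⌉₊ (hbound i)) ?_
    exact Ideal.mul_mono_left (le_iSup (fun j : Fin (n + 1) =>
      Ideal.span ((fun x : LObj R L (p ^ e) (j : ℕ) => aMap A p e R j n
        (Nat.lt_succ_iff.mp j.isLt) (Φ j (RootMod.of A p e R j x))) ''
        (((𝔞 ^ ⌈((p : ℝ) ^ e) ^ (j : ℕ) * lam⌉₊ * I) •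
            (⊤ : Submodule R (LObj R L (p ^ e) (j : ℕ))) :
          Submodule R (LObj R L (p ^ e) (j : ℕ))) : Set (LObj R L (p ^ e) (j : ℕ))))) i)
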